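/- The homeomorphic embedding relation $\unlhd$ on first-order terms over a finite signature is a well-quasi order: every infinite sequence of terms $t_1, t_2, \ldots$ contains indices $i < j$ with $t_i \unlhd t_j$. -/

import Mathlib

/-- First-order terms over a signature `F` indexed by arity, with variables. -/
inductive Tm (F : ℕ → Type) : Type
  | var : ℕ → Tm F
  | app : (n : ℕ) → F n → (Fin n → Tm F) → Tm F

/-- The homeomorphic embedding relation on terms: all variables are identified,
`s ⊴ f(t₁,…,tₙ)` if `s ⊴ tᵢ` for some `i` (diving), and
`f(s₁,…,sₙ) ⊴ f(t₁,…,tₙ)` if `sᵢ ⊴ tᵢ` for all `i` (coupling). -/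
inductive Emb {F : ℕ → Type} : Tm F → Tm F → Prop
  | var (x y : ℕ) : Emb (.var x) (.var y)
  | dive {s : Tm F} {n : ℕ} (f : F n) (ts : Fin n → Tm F) (i : Fin n) :
      Emb s (ts i) → Emb s (.app n f ts)
  | couple {n : ℕ} (f : F n) (ss ts : Fin n → Tm F) :
      (∀ i, Emb (ss i) (ts i)) → Emb (.app n f ss) (.app n f ts)

namespace TmAux

variable {F : ℕ → Type}

/-- size of a term -/
def size : Tm F → ℕ
  | .var _ => 1
  | .app n _ ts => 1 + ∑ i : Fin n, size (ts i)

theorem size_child_lt {n : ℕ} (f : F n) (ts : Fin n → Tm F) (i : Fin n) :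
    size (ts i) < size (Tm.app n f ts) := by
  have : size (ts i) ≤ ∑ j : Fin n, size (ts j) :=
    Finset.single_le_sum (f := fun j => size (ts j)) (fun _ _ => Nat.zero_le _)
      (Finset.mem_univ i)
  simp only [size]; omega

theorem emb_refl : ∀ t : Tm F, Emb t t
  | .var x => Emb.var x x
  | .app n f ts => Emb.couple f ts ts (fun i => emb_refl (ts i))

theorem emb_trans {t u : Tm F} (h2 : Emb t u) : ∀ {s : Tm F}, Emb s t → Emb s u := by
  induction h2 with
  | var x y =>
    intro s hs
    cases hs
    exact Emb.var _ _
  | dive f ts i h ih =>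
    intro s hs
    exact Emb.dive f ts i (ih hs)
  | couple f ts us hall ih =>
    intro s hs
    cases hs with
    | dive _ _ i h' => exact Emb.dive f us i (ih i h')
    | couple _ ss _ hss => exact Emb.couple f ss us (fun i => ih i (hss i))

instance : IsRefl (Tm F) Emb := ⟨emb_refl⟩
instance : IsTrans (Tm F) Emb := ⟨fun _ _ _ h1 h2 => emb_trans h2 h1⟩
instance : IsPreorder (Tm F) Emb where
  refl := emb_refl
  trans := fun _ _ _ h1 h2 => emb_trans h2 h1

/-- `s` is an immediate subterm of `t` -/
def IsChild (s t : Tm F) : Prop :=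
  ∃ (n : ℕ) (f : F n) (ts : Fin n → Tm F) (i : Fin n), t = Tm.app n f ts ∧ s = ts i

theorem emb_of_child {s t u : Tm F} (h : IsChild t u) (hs : Emb s t) : Emb s u := by
  obtain ⟨n, f, ts, i, rfl, rfl⟩ := h
  exact Emb.dive f ts i hs

theorem size_lt_of_child {s t : Tm F} (h : IsChild s t) : size s < size t := by
  obtain ⟨n, f, ts, i, rfl, rfl⟩ := h
  exact size_child_lt f ts i

/-- the label of a term -/
def label : Tm F → Option (Σ n, F n)
  | .var _ => none
  | .app n f _ => some ⟨n, f⟩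

end TmAux

open TmAux Set.PartiallyWellOrderedOn in
/-- over a finite signature, the homeomorphic embedding is a
well-quasi order: every infinite sequence of terms contains indices `i < j`
with `t i ⊴ t j` (Kruskal's tree theorem / Higman's lemma). -/
theorem emb_wqo {F : ℕ → Type} [Finite (Σ n, F n)] (t : ℕ → Tm F) :
    ∃ i j, i < j ∧ Emb (t i) (t j) := by
  classical
  by_contra hcon
  push_neg at hcon
  -- `t` is a bad sequence; extract a minimal bad sequence `f`
  have hbad : IsBadSeq Emb Set.univ t :=
    ⟨fun _ => Set.mem_univ _, fun m n hmn h => hcon m n hmn h⟩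
  obtain ⟨f, hf1, hf2⟩ :=
    exists_min_bad_of_exists_bad Emb size Set.univ ⟨t, hbad⟩
  -- the set of immediate subterms of terms of `f`
  set C : Set (Tm F) := {s | ∃ k, IsChild s (f k)} with hC
  -- `C` is partially well-ordered by `Emb`
  have hCpwo : C.PartiallyWellOrderedOn Emb := by
    rw [iff_forall_not_isBadSeq]
    rintro g ⟨hgmem, hgbad⟩
    -- choose parents
    choose m hm using hgmem
    -- minimal parent index
    have hex : ∃ M, ∃ k, m k = M := ⟨m 0, 0, rfl⟩
    set M := Nat.find hex with hM
    obtain ⟨k₀, hk₀⟩ := Nat.find_spec hex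
    have hmin : ∀ k, M ≤ m k := fun k => Nat.find_min' hex ⟨k, rfl⟩
    -- combined sequence
    set h : ℕ → Tm F := fun i => if i < M then f i else g (k₀ + (i - M)) with hh
    have hhbad : IsBadSeq Emb Set.univ h := by
      refine ⟨fun _ => Set.mem_univ _, fun i j hij hemb => ?_⟩
      by_cases hjM : j < M
      · have hiM : i < M := hij.trans hjM
        rw [hh] at hemb; simp only [if_pos hiM, if_pos hjM] at hemb
        exact hf1.2 i j hij hemb
      · by_cases hiM : i < M
        · rw [hh] at hemb
          simp only [if_pos hiM, if_neg hjM] at hemb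
          have hch := hm (k₀ + (j - M))
          have : Emb (f i) (f (m (k₀ + (j - M)))) := emb_of_child hch hemb
          exact hf1.2 i _ (lt_of_lt_of_le hiM (hmin _)) this
        · rw [hh] at hemb
          simp only [if_neg hiM, if_neg hjM] at hemb
          have : k₀ + (i - M) < k₀ + (j - M) := by omega
          exact hgbad _ _ this hemb
    -- contradiction with minimality at `M`
    refine hf2 M h (fun i hi => by simp [hh, if_pos hi]) ?_ hhbad
    have : h M = g k₀ := by simp [hh]
    rw [this]
    have := size_lt_of_child (hk₀ ▸ hm k₀)
    exact this
  -- pigeonhole on labels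
  haveI : Finite (Option ((n : ℕ) × F n)) :=
    Finite.of_equiv _ (Equiv.optionEquivSumPUnit.{0,0} ((n : ℕ) × F n)).symm
  obtain ⟨y, hy⟩ := Finite.exists_infinite_fiber (fun k => label (f k))
  rw [Set.infinite_coe_iff] at hy
  set p : ℕ → Prop := fun k => label (f k) = y with hp
  have hyinf : (setOf p).Infinite := by
    convert hy using 1
    rfl
  have hmono := Nat.nth_strictMono hyinf
  have hmem := Nat.nth_mem_of_infinite hyinf
  set φ : ℕ → ℕ := Nat.nth p with hφ
  -- case on the common label
  cases y with
  | none =>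
    -- infinitely many variables
    obtain ⟨x0, hx0⟩ : ∃ x, f (φ 0) = Tm.var x := by
      have := hmem 0
      cases hft : f (φ 0) with
      | var x => exact ⟨x, rfl⟩
      | app n g ts => rw [hp] at this; simp [hft, label] at this
    obtain ⟨x1, hx1⟩ : ∃ x, f (φ 1) = Tm.var x := by
      have := hmem 1
      cases hft : f (φ 1) with
      | var x => exact ⟨x, rfl⟩
      | app n g ts => rw [hp] at this; simp [hft, label] at this
    exact hf1.2 (φ 0) (φ 1) (hmono Nat.zero_lt_one)
      (hx0 ▸ hx1 ▸ Emb.var x0 x1)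
  | some a =>
    obtain ⟨n, fn⟩ := a
    -- each f (φ k) is an application of fn
    have hts : ∀ k, ∃ ts : Fin n → Tm F, f (φ k) = Tm.app n fn ts := by
      intro k
      have := hmem k
      rw [hp] at this
      cases hft : f (φ k) with
      | var x => simp [hft, label] at this
      | app n' g' ts' =>
        rw [hft] at this
        simp only [label, Option.some.injEq] at this
        obtain ⟨rfl, hg⟩ := Sigma.mk.inj_iff.mp this
        exact ⟨ts', by rw [eq_of_heq hg]⟩
    choose ts hts using hts
    -- Higman's lemma on the children lists
    have hlists := hCpwo.partiallyWellOrderedOn_sublistForall₂ (r := Emb)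
    set L : ℕ → List (Tm F) := fun k => List.ofFn (ts k) with hL
    have hLmem : ∀ k, L k ∈ {l : List (Tm F) | ∀ x, x ∈ l → x ∈ C} := by
      intro k x hx
      rw [hL] at hx
      simp only [List.mem_ofFn] at hx
      obtain ⟨i, rfl⟩ := hx
      exact ⟨φ k, n, fn, ts k, i, hts k, rfl⟩
    obtain ⟨i, j, hij, hsub⟩ := hlists.exists_lt (f := L) hLmem
    -- equal lengths force pointwise embedding
    obtain ⟨l', hall, hsl⟩ := List.sublistForall₂_iff.mp hsub
    have hlen1 : (L i).length = l'.length := hall.length_eq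
    have hlen : l' = L j := by
      apply hsl.eq_of_length
      rw [← hlen1]
      simp [hL]
    subst hlen
    rw [List.forall₂_iff_get] at hall
    have hpt : ∀ a : Fin n, Emb (ts i a) (ts j a) := by
      intro a
      have h1 : a.1 < (L i).length := by simp [hL, a.2]
      have h2 : a.1 < (L j).length := by simp [hL, a.2]
      have := hall.2 a.1 h1 h2
      simpa [hL, List.get_ofFn] using this
    have : Emb (f (φ i)) (f (φ j)) := by
      rw [hts i, hts j]
      exact Emb.couple fn (ts i) (ts j) hpt
    exact hf1.2 (φ i) (φ j) (hmono hij) this
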